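/- arXiv:2605.13666 — 2 statements merged into one kernel-verified Lean document; each statement's English description precedes it below -/
import Mathlib

section
/- (Upper bound) Let A be the set of prime numbers and N ∈ ℕ. Then E[τ_N] ≤ Σ_{p prime, p ≥ N} (p − N) · (5/6)^{π(N, p−1)}, where the sum runs over all prime numbers p ≥ N. -/
open MeasureTheory ProbabilityTheory
open scoped ENNReal NNReal

noncomputable section

/-- The cumulative sum `S_t^(s) = s + X_1 + ... + X_t`, where the die faces are
`ω 0 + 1, ω 1 + 1, ...` (each in `{1,...,6}`). -/
def partialSum (s : ℕ) (ω : ℕ → Fin 6) (t : ℕ) : ℕ :=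
  s + ∑ j ∈ Finset.range t, ((ω j : ℕ) + 1)

/-- The hitting time `τ_s = inf {t : S_t^(s) ∈ A}`, with value `⊤` if the sum never hits `A`. -/
def hitTime (A : Set ℕ) (s : ℕ) (ω : ℕ → Fin 6) : ℕ∞ :=
  sInf {t : ℕ∞ | ∃ n : ℕ, t = (n : ℕ∞) ∧ partialSum s ω n ∈ A}

/-- The expectation `E[τ_s]`, as a Lebesgue integral with values in `[0,∞]`. -/
def hitExp (P : Measure (ℕ → Fin 6)) (A : Set ℕ) (s : ℕ) : ℝ≥0∞ :=
  ∫⁻ ω, (hitTime A s ω : ℝ≥0∞) ∂P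

/-- `π(s,n)`: the number of primes `p` with `s < p ≤ n` (for natural numbers `s`, `n`). -/
def primesBetween (s n : ℕ) : ℕ :=
  ((Finset.Icc (s + 1) n).filter Nat.Prime).card

namespace HitAux

/-! ### Elementary facts about the walk -/

lemma partialSum_zero (s : ℕ) (ω : ℕ → Fin 6) : partialSum s ω 0 = s := by
  simp [partialSum]

lemma partialSum_mono (s : ℕ) (ω : ℕ → Fin 6) : Monotone (partialSum s ω) := by
  intro a b hab
  exact Nat.add_le_add_left
    (Finset.sum_le_sum_of_subset (Finset.range_subset_range.mpr hab)) s

lemma le_partialSum (s : ℕ) (ω : ℕ → Fin 6) (t : ℕ) : s + t ≤ partialSum s ω t := by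
  calc s + t = s + ∑ _j ∈ Finset.range t, 1 := by simp
    _ ≤ partialSum s ω t :=
      Nat.add_le_add_left (Finset.sum_le_sum fun j _ => Nat.le_add_left 1 _) s

lemma partialSum_congr {s t : ℕ} {ω ω' : ℕ → Fin 6} (h : ∀ j < t, ω j = ω' j) :
    partialSum s ω t = partialSum s ω' t := by
  unfold partialSum
  congr 1
  exact Finset.sum_congr rfl fun j hj => by rw [h j (Finset.mem_range.mp hj)]

lemma measurable_partialSum (s t : ℕ) : Measurable fun ω : ℕ → Fin 6 => partialSum s ω t := by
  unfold partialSum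
  have h1 : ∀ j : ℕ, Measurable fun ω : ℕ → Fin 6 => ((ω j : ℕ) + 1) := fun j =>
    (Measurable.of_discrete (f := fun x : Fin 6 => (x : ℕ) + 1)).comp (measurable_pi_apply j)
  exact measurable_const.add (Finset.measurable_sum _ fun j _ => h1 j)

/-! ### Finite paths and counting -/

/-- Extend a finite tuple of die rolls by zeros. -/
def ext (n : ℕ) (v : Fin n → Fin 6) : ℕ → Fin 6 := fun j => if h : j < n then v ⟨j, h⟩ else 0

/-- `x` is allowed: not a prime that is `≤ m`. -/
def okN (m x : ℕ) : Prop := ¬(x.Prime ∧ x ≤ m)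

instance (m x : ℕ) : Decidable (okN m x) := by unfold okN; infer_instance

/-- The finite path `v` starting at `s` avoids all primes `≤ m`. -/
def pathOk (m s : ℕ) (n : ℕ) (v : Fin n → Fin 6) : Prop :=
  ∀ t ≤ n, 1 ≤ t → okN m (partialSum s (ext n v) t)

instance (m s n : ℕ) (v : Fin n → Fin 6) : Decidable (pathOk m s n v) :=
  inferInstanceAs (Decidable (∀ t ≤ n, 1 ≤ t → okN m (partialSum s (ext n v) t)))

/-- The number of good paths. -/
def cnt (m s n : ℕ) : ℕ :=
  (Finset.univ.filter fun v : Fin n → Fin 6 => pathOk m s n v).card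

lemma ext_cons_zero (n : ℕ) (d : Fin 6) (v : Fin n → Fin 6) :
    ext (n + 1) (Fin.cons d v) 0 = d := by
  unfold ext
  rw [dif_pos (by omega)]
  exact Fin.cons_zero (α := fun _ => Fin 6) d v

lemma ext_cons_succ (n : ℕ) (d : Fin 6) (v : Fin n → Fin 6) (j : ℕ) :
    ext (n + 1) (Fin.cons d v) (j + 1) = ext n v j := by
  unfold ext
  by_cases h : j < n
  · rw [dif_pos (by omega), dif_pos h]
    exact Fin.cons_succ (α := fun _ => Fin 6) d v ⟨j, h⟩
  · rw [dif_neg (by omega), dif_neg h]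

lemma partialSum_cons (s n : ℕ) (d : Fin 6) (v : Fin n → Fin 6) (t : ℕ) :
    partialSum s (ext (n + 1) (Fin.cons d v)) (t + 1)
      = partialSum (s + (d : ℕ) + 1) (ext n v) t := by
  unfold partialSum
  rw [Finset.sum_range_succ']
  have h0 : ((ext (n + 1) (Fin.cons d v) 0 : ℕ) + 1) = (d : ℕ) + 1 := by
    rw [ext_cons_zero]
  have h1 : ∀ j ∈ Finset.range t,
      ((ext (n + 1) (Fin.cons d v) (j + 1) : ℕ) + 1) = ((ext n v j : ℕ) + 1) := by
    intro j _
    rw [ext_cons_succ]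
  rw [Finset.sum_congr rfl h1, h0]
  ring

lemma pathOk_cons (m s n : ℕ) (d : Fin 6) (v : Fin n → Fin 6) :
    pathOk m s (n + 1) (Fin.cons d v)
      ↔ okN m (s + (d : ℕ) + 1) ∧ pathOk m (s + (d : ℕ) + 1) n v := by
  constructor
  · intro h
    constructor
    · have h' := h (0 + 1) (by omega) (by omega)
      rwa [partialSum_cons, partialSum_zero] at h'
    · intro t ht h1
      have h' := h (t + 1) (by omega) (by omega)
      rwa [partialSum_cons] at h'
  · rintro ⟨h0, h⟩ t ht h1
    obtain ⟨t, rfl⟩ : ∃ t', t = t' + 1 := ⟨t - 1, by omega⟩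
    rw [partialSum_cons]
    rcases Nat.eq_zero_or_pos t with rfl | hpos
    · rwa [partialSum_zero]
    · exact h t (by omega) hpos

lemma cnt_zero (m s : ℕ) : cnt m s 0 = 1 := by
  unfold cnt
  rw [Finset.filter_true_of_mem (fun v _ => by intro t ht h1; omega)]
  simp

lemma cnt_succ (m s n : ℕ) :
    cnt m s (n + 1)
      = ∑ d : Fin 6, if okN m (s + (d : ℕ) + 1) then cnt m (s + (d : ℕ) + 1) n else 0 := by
  unfold cnt
  rw [Finset.card_filter]
  rw [← Fintype.sum_equiv (Fin.consEquiv fun _ => Fin 6)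
    (fun p => if pathOk m s (n + 1) (Fin.cons p.1 p.2) then 1 else 0)
    (fun v => if pathOk m s (n + 1) v then 1 else 0) (fun p => rfl)]
  rw [Fintype.sum_prod_type]
  refine Finset.sum_congr rfl fun d _ => ?_
  by_cases hok : okN m (s + (d : ℕ) + 1)
  · rw [if_pos hok, Finset.card_filter]
    exact Finset.sum_congr rfl fun w _ => by simp [pathOk_cons, hok]
  · rw [if_neg hok]
    exact Finset.sum_eq_zero fun w _ => by simp [pathOk_cons, hok]

/-! ### The prime-counting splits -/

lemma primesBetween_eq_zero {s m : ℕ} (h : m ≤ s) : primesBetween s m = 0 := by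
  unfold primesBetween
  rw [Finset.Icc_eq_empty (by omega)]
  simp

/-- number of forbidden positions among the first `d+1` steps -/
def cB (m s : ℕ) (d : Fin 6) : ℕ :=
  (Finset.univ.filter fun e : Fin 6 =>
    (e : ℕ) ≤ (d : ℕ) ∧ (s + (e : ℕ) + 1).Prime ∧ s + (e : ℕ) + 1 ≤ m).card

lemma primesBetween_split (m s : ℕ) (d : Fin 6) :
    primesBetween s m = cB m s d + primesBetween (s + (d : ℕ) + 1) m := by
  classical
  unfold primesBetween
  have hsplit := Finset.card_filter_add_card_filter_not
    (s := (Finset.Icc (s + 1) m).filter Nat.Prime) (fun q => q ≤ s + (d : ℕ) + 1)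
  have hA : (((Finset.Icc (s + 1) m).filter Nat.Prime).filter
      (fun q => q ≤ s + (d : ℕ) + 1)).card = cB m s d := by
    unfold cB
    refine Finset.card_bij' (fun q _ => (⟨q - s - 1, by
        simp only [Finset.mem_filter, Finset.mem_Icc] at *; omega⟩ : Fin 6))
      (fun e _ => s + (e : ℕ) + 1) ?_ ?_ ?_ ?_
    · intro q hq
      simp only [Finset.mem_filter, Finset.mem_Icc] at hq
      refine Finset.mem_filter.mpr ⟨Finset.mem_univ _, ?_, ?_, ?_⟩
      · show q - s - 1 ≤ (d : ℕ); omega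
      · show (s + (q - s - 1) + 1).Prime
        have hq1 : s + (q - s - 1) + 1 = q := by omega
        rw [hq1]; exact hq.1.2
      · show s + (q - s - 1) + 1 ≤ m; omega
    · intro e he
      simp only [Finset.mem_filter, Finset.mem_univ, true_and] at he
      exact Finset.mem_filter.mpr ⟨Finset.mem_filter.mpr
        ⟨Finset.mem_Icc.mpr ⟨(by omega : s + 1 ≤ s + (e : ℕ) + 1), he.2.2⟩, he.2.1⟩,
        (by omega : s + (e : ℕ) + 1 ≤ s + (d : ℕ) + 1)⟩
    · intro q hq
      simp only [Finset.mem_filter, Finset.mem_Icc] at hq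
      show s + (q - s - 1) + 1 = q; omega
    · intro e he
      simp only [Finset.mem_filter, Finset.mem_univ, true_and] at he
      ext
      show s + (e : ℕ) + 1 - s - 1 = (e : ℕ); omega
  have hB : (((Finset.Icc (s + 1) m).filter Nat.Prime).filter
      (fun q => ¬ q ≤ s + (d : ℕ) + 1)).card
      = ((Finset.Icc (s + (d : ℕ) + 1 + 1) m).filter Nat.Prime).card := by
    congr 1
    ext q
    simp only [Finset.mem_filter, Finset.mem_Icc]
    constructor
    · rintro ⟨⟨⟨h1, h2⟩, h3⟩, h4⟩; exact ⟨⟨by omega, h2⟩, h3⟩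
    · rintro ⟨⟨h1, h2⟩, h3⟩; exact ⟨⟨⟨by omega, h2⟩, h3⟩, by omega⟩
  omega

lemma cB_le (m s : ℕ) (d : Fin 6) : cB m s d ≤ 6 := by
  unfold cB
  calc _ ≤ (Finset.univ : Finset (Fin 6)).card := Finset.card_filter_le _ _
  _ = 6 := by simp

/-! ### The key finite inequality -/

/-- counting function for an abstract forbidden pattern -/
def cbB (b : Fin 6 → Bool) (d : Fin 6) : ℕ :=
  (Finset.univ.filter fun e : Fin 6 => (e : ℕ) ≤ (d : ℕ) ∧ b e = true).card

lemma key_nat : ∀ b : Fin 6 → Bool,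
    (∑ d : Fin 6, if b d = false then 6 ^ cbB b d * 5 ^ (6 - cbB b d) else 0)
      ≤ 6 * 5 ^ 6 := by decide

lemma cbB_le (b : Fin 6 → Bool) (d : Fin 6) : cbB b d ≤ 6 := by
  unfold cbB
  calc _ ≤ (Finset.univ : Finset (Fin 6)).card := Finset.card_filter_le _ _
  _ = 6 := by simp

lemma key_nnreal (b : Fin 6 → Bool) :
    (∑ d : Fin 6, if b d = false then ((6 : ℝ≥0) / 5) ^ cbB b d else 0) ≤ 6 := by
  have h5 : (0 : ℝ≥0) < 5 ^ 6 := by positivity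
  rw [← mul_le_mul_iff_left₀ h5]
  have hterm : ∀ d : Fin 6,
      (if b d = false then ((6 : ℝ≥0) / 5) ^ cbB b d else 0) * 5 ^ 6
        = ((if b d = false then 6 ^ cbB b d * 5 ^ (6 - cbB b d) else 0 : ℕ) : ℝ≥0) := by
    intro d
    by_cases hb : b d = false
    · rw [if_pos hb, if_pos hb]
      have hc := cbB_le b d
      push_cast
      rw [div_pow, pow_sub₀ (5 : ℝ≥0) (by norm_num) hc]
      field_simp
    · rw [if_neg hb, if_neg hb]
      simp
  rw [Finset.sum_mul, Finset.sum_congr rfl fun d _ => hterm d, ← Nat.cast_sum]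
  calc ((∑ d : Fin 6, if b d = false then 6 ^ cbB b d * 5 ^ (6 - cbB b d) else 0 : ℕ) : ℝ≥0)
      ≤ ((6 * 5 ^ 6 : ℕ) : ℝ≥0) := by exact_mod_cast Nat.cast_le.mpr (key_nat b)
    _ = 6 * 5 ^ 6 := by push_cast; ring

/-! ### The main counting bound -/

lemma cnt_le (m : ℕ) : ∀ n s, m ≤ s + n →
    (cnt m s n : ℝ≥0) ≤ (5 / 6) ^ primesBetween s m * 6 ^ n := by
  intro n
  induction n with
  | zero =>
    intro s hs
    rw [cnt_zero, primesBetween_eq_zero (by omega)]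
    simp
  | succ n ih =>
    intro s hs
    rw [cnt_succ]
    push_cast
    set b : Fin 6 → Bool := fun e => decide ((s + (e : ℕ) + 1).Prime ∧ s + (e : ℕ) + 1 ≤ m)
      with hbdef
    have hok : ∀ d : Fin 6, okN m (s + (d : ℕ) + 1) ↔ b d = false := by
      intro d
      simp [hbdef, okN]
    have hcb : ∀ d : Fin 6, cB m s d = cbB b d := by
      intro d
      unfold cB cbB
      congr 1
      apply Finset.filter_congr
      intro e _
      simp [hbdef]
    have hterm : ∀ d : Fin 6,
        (if okN m (s + (d : ℕ) + 1) then (cnt m (s + (d : ℕ) + 1) n : ℝ≥0) else 0)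
          ≤ (if b d = false then ((6 : ℝ≥0) / 5) ^ cbB b d else 0)
            * ((5 / 6) ^ primesBetween s m * 6 ^ n) := by
      intro d
      by_cases hd : okN m (s + (d : ℕ) + 1)
      · rw [if_pos hd, if_pos ((hok d).mp hd)]
        have h1 := ih (s + (d : ℕ) + 1) (by omega)
        refine h1.trans ?_
        rw [← mul_assoc]
        gcongr
        rw [primesBetween_split m s d, pow_add, ← mul_assoc, hcb d, ← mul_pow]
        rw [show ((6 : ℝ≥0) / 5) * (5 / 6) = 1 by norm_num, one_pow, one_mul]
      · rw [if_neg hd, if_neg (by rw [← hok d]; exact hd)]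
        simp
    calc (∑ d : Fin 6, if okN m (s + (d : ℕ) + 1)
            then (cnt m (s + (d : ℕ) + 1) n : ℝ≥0) else 0)
        ≤ ∑ d : Fin 6, (if b d = false then ((6 : ℝ≥0) / 5) ^ cbB b d else 0)
            * ((5 / 6) ^ primesBetween s m * 6 ^ n) :=
          Finset.sum_le_sum fun d _ => hterm d
      _ = (∑ d : Fin 6, if b d = false then ((6 : ℝ≥0) / 5) ^ cbB b d else 0)
            * ((5 / 6) ^ primesBetween s m * 6 ^ n) := by rw [Finset.sum_mul]
      _ ≤ 6 * ((5 / 6) ^ primesBetween s m * 6 ^ n) := by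
          gcongr
          exact key_nnreal b
      _ = (5 / 6) ^ primesBetween s m * 6 ^ (n + 1) := by ring

/-! ### Cylinders and the avoid-set -/

lemma ext_apply_lt (n : ℕ) (v : Fin n → Fin 6) (j : ℕ) (h : j < n) :
    ext n v j = v ⟨j, h⟩ := by
  unfold ext
  rw [dif_pos h]

def cylSet (K : ℕ) (v : Fin K → Fin 6) : Set (ℕ → Fin 6) :=
  ⋂ i ∈ Finset.range K, (fun ω : ℕ → Fin 6 => ω i) ⁻¹' {ext K v i}

lemma mem_cylSet {K : ℕ} {v : Fin K → Fin 6} {ω : ℕ → Fin 6} :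
    ω ∈ cylSet K v ↔ ∀ i < K, ω i = ext K v i := by
  simp [cylSet]

lemma measurableSet_cylSet (K : ℕ) (v : Fin K → Fin 6) : MeasurableSet (cylSet K v) :=
  MeasurableSet.biInter (Finset.range K).countable_toSet fun i _ =>
    (measurable_pi_apply i) (measurableSet_singleton _)

lemma cylSet_meas (P : Measure (ℕ → Fin 6)) [IsProbabilityMeasure P]
    (hIndep : iIndepFun (fun n (ω : ℕ → Fin 6) => ω n) P)
    (hUnif : ∀ (n : ℕ) (i : Fin 6), P {ω | ω n = i} = 1 / 6)
    (K : ℕ) (v : Fin K → Fin 6) :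
    P (cylSet K v) = (1 / 6 : ℝ≥0∞) ^ K := by
  have hme := hIndep.measure_inter_preimage_eq_mul (Finset.range K)
      (sets := fun i => ({ext K v i} : Set (Fin 6))) (fun i _ => measurableSet_singleton _)
  rw [cylSet, hme]
  calc ∏ i ∈ Finset.range K, P ((fun ω : ℕ → Fin 6 => ω i) ⁻¹' {ext K v i})
      = ∏ _i ∈ Finset.range K, (1 / 6 : ℝ≥0∞) :=
        Finset.prod_congr rfl fun i _ => hUnif i (ext K v i)
    _ = (1 / 6 : ℝ≥0∞) ^ K := by rw [Finset.prod_const, Finset.card_range]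

def avoidSet (s m : ℕ) : Set (ℕ → Fin 6) := {ω | ∀ t, 1 ≤ t → okN m (partialSum s ω t)}

lemma measurableSet_avoidSet (s m : ℕ) : MeasurableSet (avoidSet s m) := by
  have h : avoidSet s m
      = ⋂ t, ⋂ (_ : 1 ≤ t), (fun ω => partialSum s ω t) ⁻¹' {x | okN m x} := by
    ext ω
    simp [avoidSet, Set.mem_iInter]
  rw [h]
  exact MeasurableSet.iInter fun t => MeasurableSet.iInter fun _ =>
    (measurable_partialSum s t) .of_discrete

lemma avoidSet_eq (s m : ℕ) :
    avoidSet s m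
      = ⋃ v ∈ Finset.univ.filter (fun v : Fin (m - s) → Fin 6 => pathOk m s (m - s) v),
          cylSet (m - s) v := by
  ext ω
  simp only [Set.mem_iUnion, Finset.mem_filter, Finset.mem_univ, true_and]
  constructor
  · intro h
    refine ⟨fun i => ω (i : ℕ), ?_, ?_⟩
    · intro t ht h1
      have he : partialSum s (ext (m - s) fun i => ω (i : ℕ)) t = partialSum s ω t :=
        partialSum_congr fun j hj => by
          rw [ext_apply_lt _ _ j (by omega)]
      rw [he]
      exact h t h1
    · exact mem_cylSet.mpr fun i hi => by rw [ext_apply_lt _ _ i hi]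
  · rintro ⟨v, hv, hc⟩ t h1
    rcases le_or_gt t (m - s) with htK | htK
    · have he : partialSum s ω t = partialSum s (ext (m - s) v) t :=
        partialSum_congr fun j hj => mem_cylSet.mp hc j (by omega)
      rw [he]
      exact hv t htK h1
    · have h2 := le_partialSum s ω t
      intro hcon
      have h3 := hcon.2
      omega

lemma avoid_prob (P : Measure (ℕ → Fin 6)) [IsProbabilityMeasure P]
    (hIndep : iIndepFun (fun n (ω : ℕ → Fin 6) => ω n) P)
    (hUnif : ∀ (n : ℕ) (i : Fin 6), P {ω | ω n = i} = 1 / 6)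
    (s m : ℕ) :
    P (avoidSet s m) ≤ (5 / 6 : ℝ≥0∞) ^ primesBetween s m := by
  have h56 : ((5 / 6 : ℝ≥0) : ℝ≥0∞) = 5 / 6 := by
    rw [ENNReal.coe_div (by norm_num : (6 : ℝ≥0) ≠ 0)]
    norm_num
  set K := m - s with hK
  rw [avoidSet_eq s m]
  rw [measure_biUnion_finset ?disj (fun v _ => measurableSet_cylSet _ _)]
  case disj =>
    intro v _ w _ hvw
    obtain ⟨i, hi⟩ := Function.ne_iff.mp hvw
    refine Set.disjoint_left.mpr fun ω h1 h2 => hi ?_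
    have e1 := mem_cylSet.mp h1 (i : ℕ) i.isLt
    have e2 := mem_cylSet.mp h2 (i : ℕ) i.isLt
    rw [ext_apply_lt _ _ _ i.isLt] at e1 e2
    rw [← e1, ← e2]
  rw [Finset.sum_congr rfl fun w _ => cylSet_meas P hIndep hUnif K w, Finset.sum_const]
  have hcard : (Finset.univ.filter fun v : Fin K → Fin 6 => pathOk m s K v).card
      = cnt m s K := rfl
  rw [hcard, nsmul_eq_mul]
  have hle := cnt_le m K s (by omega)
  calc (cnt m s K : ℝ≥0∞) * (1 / 6 : ℝ≥0∞) ^ K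
      = ((cnt m s K : ℝ≥0) : ℝ≥0∞) * (1 / 6 : ℝ≥0∞) ^ K := by
        rw [ENNReal.coe_natCast]
    _ ≤ (((5 / 6 : ℝ≥0) ^ primesBetween s m * 6 ^ K : ℝ≥0) : ℝ≥0∞)
          * (1 / 6 : ℝ≥0∞) ^ K := by
        gcongr
    _ = (5 / 6 : ℝ≥0∞) ^ primesBetween s m * ((6 : ℝ≥0∞) ^ K * (1 / 6 : ℝ≥0∞) ^ K) := by
        push_cast
        rw [h56]
        ring
    _ = (5 / 6 : ℝ≥0∞) ^ primesBetween s m := by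
        rw [← mul_pow, one_div, ENNReal.mul_inv_cancel (by norm_num) (by norm_num),
          one_pow, mul_one]

/-! ### Hitting sets -/

def hitSet (N p : ℕ) : Set (ℕ → Fin 6) :=
  ({ω | ∃ t, partialSum N ω t = p} ∩
    ⋂ (q : ℕ) (_ : q.Prime) (_ : q < p) (t : ℕ), {ω | partialSum N ω t ≠ q}) ∩
  {_ω | p.Prime}

lemma mem_hitSet {N p : ℕ} {ω : ℕ → Fin 6} :
    ω ∈ hitSet N p ↔ (∃ t, partialSum N ω t = p)
      ∧ (∀ q, q.Prime → q < p → ∀ t, partialSum N ω t ≠ q) ∧ p.Prime := by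
  simp [hitSet, Set.mem_iInter, and_assoc]

lemma measurableSet_hitSet (N p : ℕ) : MeasurableSet (hitSet N p) := by
  refine MeasurableSet.inter (MeasurableSet.inter ?_ ?_) (MeasurableSet.const _)
  · rw [Set.setOf_exists]
    exact MeasurableSet.iUnion fun t =>
      (measurable_partialSum N t) (MeasurableSet.of_discrete (s := ({p} : Set ℕ)))
  · refine MeasurableSet.iInter fun q => MeasurableSet.iInter fun _ =>
      MeasurableSet.iInter fun _ => MeasurableSet.iInter fun t => ?_
    exact ((measurable_partialSum N t)
      (MeasurableSet.of_discrete (s := ({q} : Set ℕ)))).compl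

def noHitSet (N : ℕ) : Set (ℕ → Fin 6) := {ω | ∀ t, ¬ (partialSum N ω t).Prime}

lemma measurableSet_noHitSet (N : ℕ) : MeasurableSet (noHitSet N) := by
  have h : noHitSet N = ⋂ t, ((fun ω => partialSum N ω t) ⁻¹' {x | x.Prime})ᶜ := by
    ext ω
    simp [noHitSet, Set.mem_iInter]
  rw [h]
  exact MeasurableSet.iInter fun t =>
    ((measurable_partialSum N t) .of_discrete).compl

lemma noHit_subset_avoid (N m : ℕ) : noHitSet N ⊆ avoidSet N m :=
  fun _ω h t _ hcon => h t hcon.1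

lemma hitSet_subset_avoid (N p : ℕ) : hitSet N p ⊆ avoidSet N (p - 1) := by
  intro ω h
  obtain ⟨_, hforall, hp⟩ := mem_hitSet.mp h
  intro t _ hcon
  have hplt := hp.one_lt
  exact hforall _ hcon.1 (by omega) t rfl

lemma hit_mem_of_exists {N : ℕ} {ω : ℕ → Fin 6} (h : ∃ t, (partialSum N ω t).Prime) :
    ω ∈ hitSet N (partialSum N ω (Nat.find h)) := by
  refine mem_hitSet.mpr ⟨⟨Nat.find h, rfl⟩, ?_, Nat.find_spec h⟩
  intro q hq hlt t hSt
  rcases lt_or_ge t (Nat.find h) with hlt' | hge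
  · exact Nat.find_min h hlt' (hSt ▸ hq)
  · have := partialSum_mono N ω hge
    omega

lemma hitTime_le {N p : ℕ} {ω : ℕ → Fin 6} (h : ω ∈ hitSet N p) :
    (hitTime {n | n.Prime} N ω : ℝ≥0∞) ≤ ((p - N : ℕ) : ℝ≥0∞) := by
  obtain ⟨⟨t0, ht0⟩, _, hp⟩ := mem_hitSet.mp h
  have h1 : hitTime {n | n.Prime} N ω ≤ (t0 : ℕ∞) :=
    sInf_le ⟨t0, rfl, by rw [ht0]; exact hp⟩
  have h2 : t0 ≤ p - N := by
    have := le_partialSum N ω t0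
    omega
  calc (hitTime {n | n.Prime} N ω : ℝ≥0∞) ≤ ((t0 : ℕ∞) : ℝ≥0∞) :=
        ENat.toENNReal_le.mpr h1
    _ = (t0 : ℝ≥0∞) := ENat.toENNReal_coe t0
    _ ≤ ((p - N : ℕ) : ℝ≥0∞) := by exact_mod_cast h2

lemma pointwise_bound (N : ℕ) (ω : ℕ → Fin 6) :
    (hitTime {n | n.Prime} N ω : ℝ≥0∞)
      ≤ (∑' p : ℕ, Set.indicator (hitSet N p) (fun _ => ((p - N : ℕ) : ℝ≥0∞)) ω)
        + Set.indicator (noHitSet N) (fun _ => (⊤ : ℝ≥0∞)) ω := by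
  by_cases h : ∃ t, (partialSum N ω t).Prime
  · have hmem := hit_mem_of_exists h
    set p := partialSum N ω (Nat.find h) with hp
    calc (hitTime {n | n.Prime} N ω : ℝ≥0∞) ≤ ((p - N : ℕ) : ℝ≥0∞) := hitTime_le hmem
      _ = Set.indicator (hitSet N p) (fun _ => ((p - N : ℕ) : ℝ≥0∞)) ω :=
          (Set.indicator_of_mem hmem fun _ => ((p - N : ℕ) : ℝ≥0∞)).symm
      _ ≤ ∑' q : ℕ, Set.indicator (hitSet N q) (fun _ => ((q - N : ℕ) : ℝ≥0∞)) ω :=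
          ENNReal.le_tsum p
      _ ≤ _ := le_self_add
  · push_neg at h
    have hmem : ω ∈ noHitSet N := h
    rw [Set.indicator_of_mem hmem]
    rw [add_top]
    exact le_top

lemma primesBetween_unbounded (N : ℕ) : ∀ k, ∃ m, k ≤ primesBetween N m := by
  intro k
  induction k with
  | zero => exact ⟨0, Nat.zero_le _⟩
  | succ k ih =>
    obtain ⟨m, hm⟩ := ih
    obtain ⟨p, hp1, hp2⟩ := Nat.exists_infinite_primes (max (N + 1) (m + 1))
    refine ⟨p, ?_⟩
    have hsub : (Finset.Icc (N + 1) m).filter Nat.Prime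
        ⊂ (Finset.Icc (N + 1) p).filter Nat.Prime := by
      refine (Finset.ssubset_iff_of_subset
        (Finset.filter_subset_filter _ (Finset.Icc_subset_Icc_right (by omega)))).mpr ?_
      refine ⟨p, ?_, ?_⟩
      · exact Finset.mem_filter.mpr ⟨Finset.mem_Icc.mpr ⟨by omega, le_rfl⟩, hp2⟩
      · intro hcon
        have := (Finset.mem_Icc.mp (Finset.mem_filter.mp hcon).1).2
        omega
    have := Finset.card_lt_card hsub
    unfold primesBetween at *
    omega

lemma noHit_prob_zero (P : Measure (ℕ → Fin 6)) [IsProbabilityMeasure P]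
    (hIndep : iIndepFun (fun n (ω : ℕ → Fin 6) => ω n) P)
    (hUnif : ∀ (n : ℕ) (i : Fin 6), P {ω | ω n = i} = 1 / 6) (N : ℕ) :
    P (noHitSet N) = 0 := by
  have h56 : ((5 / 6 : ℝ≥0) : ℝ≥0∞) = 5 / 6 := by
    rw [ENNReal.coe_div (by norm_num : (6 : ℝ≥0) ≠ 0)]
    norm_num
  have hlt1 : (5 / 6 : ℝ≥0∞) < 1 := by
    rw [← h56, ← ENNReal.coe_one]
    exact ENNReal.coe_lt_coe.mpr ((div_lt_one (by norm_num)).mpr (by norm_num))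
  have hle1 : (5 / 6 : ℝ≥0∞) ≤ 1 := hlt1.le
  have hb : ∀ k : ℕ, P (noHitSet N) ≤ (5 / 6 : ℝ≥0∞) ^ k := by
    intro k
    obtain ⟨m, hm⟩ := primesBetween_unbounded N k
    calc P (noHitSet N) ≤ P (avoidSet N m) := measure_mono (noHit_subset_avoid N m)
      _ ≤ (5 / 6 : ℝ≥0∞) ^ primesBetween N m := avoid_prob P hIndep hUnif N m
      _ ≤ (5 / 6 : ℝ≥0∞) ^ k := pow_le_pow_of_le_one zero_le hle1 hm
  have h0 : P (noHitSet N) ≤ 0 :=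
    ge_of_tendsto' (ENNReal.tendsto_pow_atTop_nhds_zero_of_lt_one hlt1) hb
  exact le_antisymm h0 zero_le

end HitAux

/-- Upper bound: for `A` the set of primes,
`E[τ_N] ≤ Σ_{p prime, p ≥ N} (p − N) · (5/6)^{π(N, p−1)}`. -/
theorem hitExp_upper_bound
    (P : Measure (ℕ → Fin 6)) [IsProbabilityMeasure P]
    (hIndep : iIndepFun (fun n (ω : ℕ → Fin 6) => ω n) P)
    (hUnif : ∀ (n : ℕ) (i : Fin 6), P {ω | ω n = i} = 1 / 6) (N : ℕ) :
    hitExp P {n | n.Prime} N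
      ≤ ∑' p : ℕ, if p.Prime ∧ N ≤ p then
          ((p - N : ℕ) : ℝ≥0∞) * (5 / 6 : ℝ≥0∞) ^ primesBetween N (p - 1)
        else 0 := by
  classical
  open HitAux in
  calc hitExp P {n | n.Prime} N
      = ∫⁻ ω, (hitTime {n | n.Prime} N ω : ℝ≥0∞) ∂P := rfl
    _ ≤ ∫⁻ ω, ((∑' p : ℕ, Set.indicator (HitAux.hitSet N p)
            (fun _ => ((p - N : ℕ) : ℝ≥0∞)) ω)
          + Set.indicator (HitAux.noHitSet N) (fun _ => (⊤ : ℝ≥0∞)) ω) ∂P :=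
        lintegral_mono (HitAux.pointwise_bound N)
    _ = (∫⁻ ω, ∑' p : ℕ, Set.indicator (HitAux.hitSet N p)
            (fun _ => ((p - N : ℕ) : ℝ≥0∞)) ω ∂P)
          + ∫⁻ ω, Set.indicator (HitAux.noHitSet N) (fun _ => (⊤ : ℝ≥0∞)) ω ∂P :=
        lintegral_add_right _
          (measurable_const.indicator (HitAux.measurableSet_noHitSet N))
    _ = (∑' p : ℕ, ∫⁻ ω, Set.indicator (HitAux.hitSet N p)
            (fun _ => ((p - N : ℕ) : ℝ≥0∞)) ω ∂P)
          + (⊤ : ℝ≥0∞) * P (HitAux.noHitSet N) := by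
        rw [lintegral_tsum fun p =>
            (measurable_const.indicator (HitAux.measurableSet_hitSet N p)).aemeasurable,
          lintegral_indicator_const (HitAux.measurableSet_noHitSet N)]
    _ = ∑' p : ℕ, ((p - N : ℕ) : ℝ≥0∞) * P (HitAux.hitSet N p) := by
        rw [HitAux.noHit_prob_zero P hIndep hUnif N, mul_zero, add_zero]
        exact tsum_congr fun p =>
          lintegral_indicator_const (HitAux.measurableSet_hitSet N p) _
    _ ≤ ∑' p : ℕ, if p.Prime ∧ N ≤ p then
          ((p - N : ℕ) : ℝ≥0∞) * (5 / 6 : ℝ≥0∞) ^ primesBetween N (p - 1)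
        else 0 := by
        refine ENNReal.tsum_le_tsum fun p => ?_
        by_cases hp : p.Prime ∧ N ≤ p
        · rw [if_pos hp]
          exact mul_le_mul_right
            ((measure_mono (HitAux.hitSet_subset_avoid N p)).trans
              (HitAux.avoid_prob P hIndep hUnif N (p - 1))) _
        · rw [if_neg hp]
          rcases not_and_or.mp hp with hnp | hlt
          · have hempty : HitAux.hitSet N p = ∅ := by
              ext ω
              simp only [HitAux.mem_hitSet, Set.mem_empty_iff_false, iff_false]
              tauto
            rw [hempty]
            simp
          · have h0 : (p - N : ℕ) = 0 := by omega
            rw [h0]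
            simp
end
end

section
/- (Generalized upper bound for higher moments) Let A be the set of prime numbers, N ∈ ℕ, and k ≥ 1 an integer. Then E[τ_N^k] ≤ Σ_{p prime, p ≥ N} (p − N)^k · (5/6)^{π(N, p−1)}, where the sum runs over all prime numbers p ≥ N. -/
open MeasureTheory ProbabilityTheory
open scoped ENNReal NNReal

noncomputable section

namespace RMUB

def face (x : Fin 6) : ℕ := (x : ℕ) + 1

lemma face_pos (x : Fin 6) : 1 ≤ face x := by simp [face]
lemma face_le (x : Fin 6) : face x ≤ 6 := by have := x.2; simp [face]

/-- sum of die faces along a list of steps -/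
def pSum (N : ℕ) (l : List (Fin 6)) : ℕ := N + (l.map face).sum

lemma pSum_nil (N : ℕ) : pSum N ([] : List (Fin 6)) = N := by simp [pSum]

lemma pSum_concat (N : ℕ) (l : List (Fin 6)) (j : Fin 6) :
    pSum N (l ++ [j]) = pSum N l + face j := by
  simp [pSum, add_assoc]

lemma length_le_sum (l : List (Fin 6)) : l.length ≤ (l.map face).sum := by
  induction l with
  | nil => simp
  | cons a l ih =>
    simp only [List.map_cons, List.sum_cons, List.length_cons]
    have := face_pos a
    omega

lemma pSum_ge (N : ℕ) (l : List (Fin 6)) : N + l.length ≤ pSum N l := by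
  have := length_le_sum l
  simp only [pSum]; omega

lemma pSum_take_lt (N : ℕ) (l : List (Fin 6)) {t : ℕ} (ht : t < l.length) :
    pSum N (l.take t) < pSum N l := by
  conv_rhs => rw [← List.take_append_drop t l]
  simp only [pSum, List.map_append, List.sum_append]
  have h1 : (l.drop t).length ≤ ((l.drop t).map face).sum := length_le_sum _
  have h2 : 0 < (l.drop t).length := by simp; omega
  omega

/-- "good path": reaches `n` from `N` while all strictly-earlier partial sums avoid `A`. -/
def Good (N n : ℕ) (A : Set ℕ) (l : List (Fin 6)) : Prop :=
  pSum N l = n ∧ ∀ t < l.length, pSum N (l.take t) ∉ A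

open scoped Classical in
/-- weighted count of good paths -/
noncomputable def gsum (N : ℕ) (A : Set ℕ) (n : ℕ) : ℝ≥0∞ :=
  ∑' l : List (Fin 6), if Good N n A l then (6⁻¹ : ℝ≥0∞) ^ l.length else 0

lemma gsum_of_lt (N : ℕ) (A : Set ℕ) {n : ℕ} (hn : n < N) : gsum N A n = 0 := by
  rw [gsum]
  convert tsum_zero with l
  rw [if_neg]
  rintro ⟨h1, -⟩
  have := pSum_ge N l
  omega

lemma gsum_self (N : ℕ) (A : Set ℕ) : gsum N A N = 1 := by
  rw [gsum, tsum_eq_single ([] : List (Fin 6))]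
  · rw [if_pos ⟨pSum_nil N, by simp⟩]; simp
  · intro l hl
    rw [if_neg]
    rintro ⟨h1, -⟩
    have := pSum_ge N l
    have : l.length = 0 := by omega
    exact hl (List.length_eq_zero_iff.mp this)

lemma good_concat (N n : ℕ) (A : Set ℕ) (l : List (Fin 6)) (j : Fin 6) :
    Good N n A (l ++ [j]) ↔
      pSum N l + face j = n ∧ pSum N l ∉ A ∧ Good N (pSum N l) A l := by
  constructor
  · rintro ⟨h1, h2⟩
    rw [pSum_concat] at h1
    refine ⟨h1, ?_, rfl, fun t ht => ?_⟩
    · have := h2 l.length (by simp)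
      rwa [List.take_append_of_le_length le_rfl, List.take_length] at this
    · have := h2 t (by simp; omega)
      rwa [List.take_append_of_le_length (le_of_lt ht)] at this
  · rintro ⟨h1, h2, -, h3⟩
    refine ⟨by rw [pSum_concat]; exact h1, fun t ht => ?_⟩
    simp only [List.length_append, List.length_cons, List.length_nil] at ht
    rcases Nat.lt_or_ge t l.length with h | h
    · rw [List.take_append_of_le_length (le_of_lt h)]; exact h3 t h
    · have : t = l.length := by omega
      subst this
      rw [List.take_append_of_le_length le_rfl, List.take_length]; exact h2


open scoped Classical in
lemma gsum_rec (N : ℕ) (A : Set ℕ) (n : ℕ) (hn : n ≠ N) :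
    gsum N A n = ∑ j ∈ Finset.range 6,
      6⁻¹ * (if j + 1 ≤ n ∧ (n - j - 1) ∉ A then gsum N A (n - j - 1) else 0) := by
  classical
  set F : List (Fin 6) → ℝ≥0∞ := fun l => if Good N n A l then (6⁻¹ : ℝ≥0∞) ^ l.length else 0
    with hF
  have hinj : Function.Injective (fun p : List (Fin 6) × Fin 6 => p.1 ++ [p.2]) := by
    rintro ⟨l₁, a⟩ ⟨l₂, b⟩ h
    simp only [← List.concat_eq_append] at h
    obtain ⟨h1, h2⟩ := List.concat_inj.mp h
    simp [h1, h2]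
  have hsupp : Function.support F ⊆ Set.range (fun p : List (Fin 6) × Fin 6 => p.1 ++ [p.2]) := by
    intro l hl
    have hgood : Good N n A l := by
      by_contra hg; simp [hF, hg] at hl
    have hne : l ≠ [] := by
      rintro rfl
      exact hn (hgood.1 ▸ (pSum_nil N).symm ▸ rfl) |>.elim
    exact ⟨⟨l.dropLast, l.getLast hne⟩, List.dropLast_append_getLast hne⟩
  have h1 : gsum N A n = ∑' p : List (Fin 6) × Fin 6, F (p.1 ++ [p.2]) :=
    (hinj.tsum_eq hsupp).symm
  rw [h1, ENNReal.tsum_prod (f := fun a (b : Fin 6) => F (a ++ [b])), ENNReal.tsum_comm]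
  have h2 : ∀ j : Fin 6, (∑' l : List (Fin 6), F (l ++ [j]))
      = 6⁻¹ * (if (j : ℕ) + 1 ≤ n ∧ (n - (j : ℕ) - 1) ∉ A then gsum N A (n - (j : ℕ) - 1) else 0) := by
    intro j
    by_cases hj : (j : ℕ) + 1 ≤ n ∧ (n - (j : ℕ) - 1) ∉ A
    · rw [if_pos hj]
      have key : ∀ l : List (Fin 6), F (l ++ [j])
          = 6⁻¹ * (if Good N (n - (j : ℕ) - 1) A l then (6⁻¹ : ℝ≥0∞) ^ l.length else 0) := by
        intro l
        simp only [hF, good_concat]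
        by_cases hg : Good N (n - (j : ℕ) - 1) A l
        · have hps : pSum N l = n - (j : ℕ) - 1 := hg.1
          rw [if_pos ⟨by simp [hps, face]; omega, by rw [hps]; exact hj.2, hps ▸ hg⟩, if_pos hg]
          rw [List.length_append, List.length_singleton, pow_succ, mul_comm]
        · rw [if_neg, if_neg hg, mul_zero]
          rintro ⟨e1, e2, e3⟩
          have hps : pSum N l = n - (j : ℕ) - 1 := by simp [face] at e1; omega
          exact hg (hps ▸ e3)
      rw [tsum_congr key, ENNReal.tsum_mul_left]
      rfl
    · rw [if_neg hj, mul_zero]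
      convert tsum_zero with l
      simp only [hF, good_concat]
      rw [if_neg]
      rintro ⟨e1, e2, e3⟩
      simp only [face] at e1
      have h1 : (j : ℕ) + 1 ≤ n := by omega
      have h2 : pSum N l = n - (j : ℕ) - 1 := by omega
      exact hj ⟨h1, h2 ▸ e2⟩
  calc ∑' (j : Fin 6) (l : List (Fin 6)), F (l ++ [j])
      = ∑ j : Fin 6, ∑' l : List (Fin 6), F (l ++ [j]) := tsum_fintype _
    _ = ∑ j : Fin 6, 6⁻¹ * (if (j:ℕ) + 1 ≤ n ∧ (n - (j:ℕ) - 1) ∉ A then gsum N A (n - (j:ℕ) - 1) else 0) :=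
        Finset.sum_congr rfl fun j _ => h2 j
    _ = ∑ j ∈ Finset.range 6, 6⁻¹ * (if j + 1 ≤ n ∧ (n - j - 1) ∉ A then gsum N A (n - j - 1) else 0) :=
        Fin.sum_univ_eq_sum_range
          (fun j => 6⁻¹ * (if j + 1 ≤ n ∧ (n - j - 1) ∉ A then gsum N A (n - j - 1) else 0)) 6

open scoped Classical in
noncomputable def gg (N : ℕ) (A : Set ℕ) (n j : ℕ) : ℝ≥0∞ :=
  if j + 1 ≤ n ∧ (n - j - 1) ∉ A then gsum N A (n - j - 1) else 0

lemma gsum_rec' (N : ℕ) (A : Set ℕ) (n : ℕ) (hn : n ≠ N) :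
    gsum N A n = ∑ j ∈ Finset.range 6, 6⁻¹ * gg N A n j := by
  classical
  rw [gsum_rec N A n hn]
  apply Finset.sum_congr rfl
  intro j _
  rw [gg]

lemma gsum_le_one (N : ℕ) (A : Set ℕ) : ∀ n, gsum N A n ≤ 1 := by
  intro n
  induction n using Nat.strong_induction_on with
  | _ n ih =>
    rcases eq_or_ne n N with rfl | hn
    · rw [gsum_self]
    rcases Nat.lt_or_ge n N with h | h
    · rw [gsum_of_lt N A h]; exact zero_le_one
    rw [gsum_rec' N A n hn]
    calc ∑ j ∈ Finset.range 6, 6⁻¹ * gg N A n j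
        ≤ ∑ j ∈ Finset.range 6, 6⁻¹ * 1 := by
          apply Finset.sum_le_sum
          intro j _
          gcongr
          rw [gg]
          split
          · next hg => exact ih (n - j - 1) (by omega)
          · exact zero_le_one
      _ = 1 := by
          rw [Finset.sum_const, Finset.card_range, mul_one, nsmul_eq_mul]
          exact ENNReal.mul_inv_cancel (by norm_num) (by norm_num)

lemma gg_le_one (N : ℕ) (A : Set ℕ) (n j : ℕ) : gg N A n j ≤ 1 := by
  rw [gg]; split
  · exact gsum_le_one N A _
  · exact zero_le_one

noncomputable def Wf (N : ℕ) (A : Set ℕ) (n : ℕ) : ℝ≥0∞ :=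
  ∑ j ∈ Finset.range 6, ((6 - j : ℕ) : ℝ≥0∞) * 6⁻¹ * gg N A n j

noncomputable def w0f (N : ℕ) (A : Set ℕ) (n : ℕ) : ℝ≥0∞ :=
  ∑ j ∈ Finset.range 6, 6⁻¹ * gg N A n j

lemma gsum_eq_w0f (N : ℕ) (A : Set ℕ) (n : ℕ) (hn : n ≠ N) : gsum N A n = w0f N A n :=
  gsum_rec' N A n hn

lemma w0f_le_Wf (N : ℕ) (A : Set ℕ) (n : ℕ) : w0f N A n ≤ Wf N A n := by
  apply Finset.sum_le_sum
  intro j hj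
  simp only [Finset.mem_range] at hj
  have h1 : (1 : ℝ≥0∞) ≤ ((6 - j : ℕ) : ℝ≥0∞) := by
    exact_mod_cast (by omega : 1 ≤ 6 - j)
  calc 6⁻¹ * gg N A n j = 1 * 6⁻¹ * gg N A n j := by rw [one_mul]
    _ ≤ ((6 - j : ℕ) : ℝ≥0∞) * 6⁻¹ * gg N A n j := by gcongr

lemma Wf_le_six_w0f (N : ℕ) (A : Set ℕ) (n : ℕ) : Wf N A n ≤ 6 * w0f N A n := by
  rw [w0f, Finset.mul_sum]
  apply Finset.sum_le_sum
  intro j hj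
  have h1 : ((6 - j : ℕ) : ℝ≥0∞) ≤ 6 := by
    exact_mod_cast (by omega : 6 - j ≤ 6)
  calc ((6 - j : ℕ) : ℝ≥0∞) * 6⁻¹ * gg N A n j ≤ 6 * 6⁻¹ * gg N A n j := by gcongr
    _ = 6 * (6⁻¹ * gg N A n j) := by ring

lemma Wf_ne_top (N : ℕ) (A : Set ℕ) (n : ℕ) : Wf N A n ≠ ⊤ := by
  apply ne_of_lt
  rw [Wf]
  apply ENNReal.sum_lt_top.mpr
  intro j _
  refine lt_of_le_of_lt (mul_le_mul_right (gg_le_one N A n j) _) ?_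
  rw [mul_one]
  exact lt_top_iff_ne_top.mpr (ENNReal.mul_ne_top (ENNReal.natCast_ne_top _) (by norm_num))

lemma w0f_ne_top (N : ℕ) (A : Set ℕ) (n : ℕ) : w0f N A n ≠ ⊤ :=
  ne_top_of_le_ne_top (Wf_ne_top N A n) (w0f_le_Wf N A n)

lemma gg_succ (N : ℕ) (A : Set ℕ) (n j : ℕ) : gg N A (n+1) (j+1) = gg N A n j := by
  classical
  have h1 : n + 1 - (j + 1) - 1 = n - j - 1 := by omega
  have h2 : (j + 1 + 1 ≤ n + 1 ∧ n + 1 - (j + 1) - 1 ∉ A) ↔ (j + 1 ≤ n ∧ n - j - 1 ∉ A) :=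
    and_congr (by omega) (by rw [h1])
  rw [gg, gg, if_congr h2 (by rw [h1]) rfl]

open scoped Classical in
lemma gg_succ_zero (N : ℕ) (A : Set ℕ) (n : ℕ) :
    gg N A (n+1) 0 = if n ∉ A then gsum N A n else 0 := by
  classical
  rw [gg]
  have h1 : n + 1 - 0 - 1 = n := by omega
  rw [h1]
  by_cases hA : n ∈ A
  · rw [if_neg (fun h => h.2 hA), if_neg (not_not_intro hA)]
  · rw [if_pos ⟨by omega, hA⟩, if_pos hA]

lemma Wf_succ (N : ℕ) (A : Set ℕ) (n : ℕ) :
    Wf N A (n+1) + w0f N A n = gg N A (n+1) 0 + Wf N A n := by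
  have hx : ∀ x : ℝ≥0∞, 6⁻¹ * x * 6 = x := fun x => by
    rw [mul_comm 6⁻¹ x, mul_assoc, ENNReal.inv_mul_cancel (by norm_num) (by norm_num), mul_one]
  rw [Wf, Wf, w0f]
  simp only [Finset.sum_range_succ, Finset.sum_range_zero, gg_succ]
  norm_num
  ring_nf
  rw [hx]
  ring

def Ap (N : ℕ) : Set ℕ := {q | q.Prime ∧ N < q}

lemma primesBetween_self (N : ℕ) : primesBetween N N = 0 := by
  rw [primesBetween]
  rw [Finset.Icc_eq_empty (by omega)]
  simp

lemma primesBetween_succ (N n : ℕ) (h : N + 1 ≤ n) :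
    primesBetween N n = primesBetween N (n - 1) + (if n.Prime then 1 else 0) := by
  rw [primesBetween, primesBetween]
  have h2 : Finset.Icc (N+1) n = insert n (Finset.Icc (N+1) (n-1)) := by
    ext a
    simp only [Finset.mem_Icc, Finset.mem_insert]
    omega
  rw [h2, Finset.filter_insert]
  by_cases hp : n.Prime
  · rw [if_pos hp, if_pos hp, Finset.card_insert_of_notMem]
    simp only [Finset.mem_filter, Finset.mem_Icc]
    rintro ⟨⟨h1, h4⟩, -⟩
    omega
  · rw [if_neg hp, if_neg hp, add_zero]

lemma Wf_le (N : ℕ) : ∀ n, N + 1 ≤ n → Wf N (Ap N) n ≤ (5/6 : ℝ≥0∞) ^ primesBetween N (n - 1) := by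
  intro n hn
  induction n, hn using Nat.le_induction with
  | base =>
    have h1 : N + 1 - 1 = N := by omega
    rw [h1, primesBetween_self, pow_zero, Wf]
    have hz : ∀ j ∈ Finset.range 6, j ≠ 0 → ((6 - j : ℕ) : ℝ≥0∞) * 6⁻¹ * gg N (Ap N) (N+1) j = 0 := by
      intro j _ hj
      rw [gg]
      split
      · next hc => rw [gsum_of_lt N _ (by omega), mul_zero]
      · rw [mul_zero]
    rw [Finset.sum_eq_single_of_mem 0 (by simp) hz]
    calc ((6 - 0 : ℕ) : ℝ≥0∞) * 6⁻¹ * gg N (Ap N) (N+1) 0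
        ≤ ((6 - 0 : ℕ) : ℝ≥0∞) * 6⁻¹ * 1 := mul_le_mul_right (gg_le_one _ _ _ _) _
      _ = 1 := by
          rw [mul_one, show ((6 - 0 : ℕ) : ℝ≥0∞) = 6 by norm_num]
          exact ENNReal.mul_inv_cancel (by norm_num) (by norm_num)
  | succ n hn ih =>
    have hnN : n ≠ N := by omega
    have hw0 : gsum N (Ap N) n = w0f N (Ap N) n := gsum_eq_w0f _ _ _ hnN
    have hsucc := Wf_succ N (Ap N) n
    have hn1 : n + 1 - 1 = n := by omega
    rw [hn1]
    by_cases hA : n ∈ Ap N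
    · rw [gg_succ_zero, if_neg (not_not_intro hA), zero_add] at hsucc
      have h6 : 6⁻¹ * Wf N (Ap N) n ≤ w0f N (Ap N) n := by
        calc 6⁻¹ * Wf N (Ap N) n ≤ 6⁻¹ * (6 * w0f N (Ap N) n) := by
              gcongr
              exact Wf_le_six_w0f N (Ap N) n
          _ = (6⁻¹ * 6) * w0f N (Ap N) n := by ring
          _ = w0f N (Ap N) n := by
              rw [ENNReal.inv_mul_cancel (by norm_num) (by norm_num), one_mul]
      have key : Wf N (Ap N) (n+1) + 6⁻¹ * Wf N (Ap N) n ≤ Wf N (Ap N) n := by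
        calc Wf N (Ap N) (n+1) + 6⁻¹ * Wf N (Ap N) n
            ≤ Wf N (Ap N) (n+1) + w0f N (Ap N) n := by gcongr
          _ = Wf N (Ap N) n := hsucc
      have e : Wf N (Ap N) n = (5 * 6⁻¹) * Wf N (Ap N) n + 6⁻¹ * Wf N (Ap N) n := by
        rw [← add_mul]
        have : (5 : ℝ≥0∞) * 6⁻¹ + 6⁻¹ = 6 * 6⁻¹ := by ring
        rw [this, ENNReal.mul_inv_cancel (by norm_num) (by norm_num), one_mul]
      have key2 : Wf N (Ap N) (n+1) ≤ (5 * 6⁻¹) * Wf N (Ap N) n := by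
        have key' : Wf N (Ap N) (n+1) + 6⁻¹ * Wf N (Ap N) n
            ≤ (5 * 6⁻¹) * Wf N (Ap N) n + 6⁻¹ * Wf N (Ap N) n := le_trans key (le_of_eq e)
        exact (ENNReal.add_le_add_iff_right
          (ENNReal.mul_ne_top (by norm_num) (Wf_ne_top N (Ap N) n))).mp key'
      have hpb : primesBetween N n = primesBetween N (n-1) + 1 := by
        rw [primesBetween_succ N n hn, if_pos hA.1]
      calc Wf N (Ap N) (n+1) ≤ (5 * 6⁻¹) * Wf N (Ap N) n := key2
        _ ≤ (5 * 6⁻¹) * (5/6 : ℝ≥0∞) ^ primesBetween N (n-1) := by gcongr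
        _ = (5/6 : ℝ≥0∞) ^ primesBetween N n := by
            rw [hpb, pow_succ, div_eq_mul_inv, mul_comm]
    · rw [gg_succ_zero, if_pos hA, hw0] at hsucc
      have heq : Wf N (Ap N) (n+1) = Wf N (Ap N) n := by
        have h1 : w0f N (Ap N) n + Wf N (Ap N) (n+1) = w0f N (Ap N) n + Wf N (Ap N) n := by
          rw [add_comm (w0f N (Ap N) n) (Wf N (Ap N) (n+1)), hsucc]
        exact (ENNReal.add_right_inj (w0f_ne_top N (Ap N) n)).mp h1
      have hpb : primesBetween N n = primesBetween N (n-1) := by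
        rw [primesBetween_succ N n hn, if_neg, add_zero]
        intro hp
        exact hA ⟨hp, by omega⟩
      rw [heq, hpb]
      exact ih

lemma gsum_prime_bound (N p : ℕ) (hp : N + 1 ≤ p) :
    gsum N (Ap N) p ≤ (5/6 : ℝ≥0∞) ^ primesBetween N (p - 1) := by
  rw [gsum_eq_w0f N _ p (by omega)]
  exact le_trans (w0f_le_Wf N _ p) (Wf_le N p hp)

lemma exists_big_primesBetween (N r : ℕ) : ∃ n, N + 1 ≤ n ∧ r ≤ primesBetween N (n - 1) := by
  induction r with
  | zero => exact ⟨N + 1, le_rfl, Nat.zero_le _⟩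
  | succ r ih =>
    obtain ⟨n, hn, hr⟩ := ih
    obtain ⟨q, hq1, hq2⟩ := Nat.exists_infinite_primes (max n (N+1))
    refine ⟨q + 2, by omega, ?_⟩
    have hq3 : n ≤ q := le_trans (le_max_left _ _) hq1
    have hq4 : N + 1 ≤ q := le_trans (le_max_right _ _) hq1
    have hsub : insert q ((Finset.Icc (N+1) (n-1)).filter Nat.Prime)
        ⊆ (Finset.Icc (N+1) (q+2-1)).filter Nat.Prime := by
      intro a ha
      rcases Finset.mem_insert.mp ha with rfl | ha
      · simp only [Finset.mem_filter, Finset.mem_Icc]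
        exact ⟨⟨hq4, by omega⟩, hq2⟩
      · simp only [Finset.mem_filter, Finset.mem_Icc] at ha ⊢
        exact ⟨⟨ha.1.1, by omega⟩, ha.2⟩
    have hcard := Finset.card_le_card hsub
    rw [Finset.card_insert_of_notMem] at hcard
    · rw [primesBetween] at hr ⊢
      omega
    · simp only [Finset.mem_filter, Finset.mem_Icc]
      rintro ⟨⟨-, h2⟩, -⟩
      omega

/-! ## Measure-theoretic part -/

def cyl (l : List (Fin 6)) : Set (ℕ → Fin 6) := {ω | ∀ i < l.length, ω i = l.getD i 0}

lemma cyl_eq_iInter (l : List (Fin 6)) :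
    cyl l = ⋂ i ∈ Finset.range l.length, (fun ω : ℕ → Fin 6 => ω i) ⁻¹' {l.getD i 0} := by
  ext ω
  simp [cyl]

lemma measurable_cyl (l : List (Fin 6)) : MeasurableSet (cyl l) := by
  rw [cyl_eq_iInter]
  exact MeasurableSet.biInter (Finset.range l.length).countable_toSet
    (fun i _ => (measurable_pi_apply i) (measurableSet_singleton _))

lemma meas_cyl (P : Measure (ℕ → Fin 6)) [IsProbabilityMeasure P]
    (hIndep : iIndepFun (fun n (ω : ℕ → Fin 6) => ω n) P)
    (hUnif : ∀ (n : ℕ) (i : Fin 6), P {ω | ω n = i} = 1 / 6) (l : List (Fin 6)) :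
    P (cyl l) = (6⁻¹ : ℝ≥0∞) ^ l.length := by
  rw [cyl_eq_iInter]
  rw [iIndepFun_iff_measure_inter_preimage_eq_mul.mp hIndep (Finset.range l.length)
    (sets := fun i => {l.getD i 0}) (fun i _ => measurableSet_singleton _)]
  have h1 : ∀ i ∈ Finset.range l.length,
      P ((fun ω : ℕ → Fin 6 => ω i) ⁻¹' {l.getD i 0}) = 6⁻¹ := by
    intro i _
    have : (fun ω : ℕ → Fin 6 => ω i) ⁻¹' {l.getD i 0} = {ω | ω i = l.getD i 0} := by
      ext ω; simp
    rw [this, hUnif i (l.getD i 0), one_div]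
  rw [Finset.prod_congr rfl h1, Finset.prod_const, Finset.card_range]

lemma partialSum_zero (N : ℕ) (ω : ℕ → Fin 6) : partialSum N ω 0 = N := by
  simp [partialSum]

lemma partialSum_succ (N : ℕ) (ω : ℕ → Fin 6) (t : ℕ) :
    partialSum N ω (t+1) = partialSum N ω t + ((ω t : ℕ) + 1) := by
  rw [partialSum, partialSum, Finset.sum_range_succ, add_assoc]

lemma partialSum_ge (N : ℕ) (ω : ℕ → Fin 6) (t : ℕ) : N + t ≤ partialSum N ω t := by
  induction t with
  | zero => simp [partialSum]
  | succ t ih => rw [partialSum_succ]; omega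

lemma partialSum_le_succ (N : ℕ) (ω : ℕ → Fin 6) (t : ℕ) :
    partialSum N ω (t+1) ≤ partialSum N ω t + 6 := by
  rw [partialSum_succ]
  have := (ω t).2
  omega

lemma partialSum_eq_pSum (N : ℕ) (ω : ℕ → Fin 6) (l : List (Fin 6)) (hω : ω ∈ cyl l) :
    ∀ u ≤ l.length, partialSum N ω u = pSum N (l.take u) := by
  intro u hu
  induction u with
  | zero => simp [partialSum_zero, pSum]
  | succ u ih =>
    have hu' : u < l.length := by omega
    rw [partialSum_succ, ih (by omega)]
    have ht : l.take (u+1) = l.take u ++ [l.getD u 0] := by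
      rw [List.getD_eq_getElem l 0 hu', List.take_succ, List.getElem?_eq_getElem hu']
      simp
    rw [ht, pSum_concat, face, hω u hu', List.getD_eq_getElem l 0 hu']

/-- the event: the walk visits `n` and all earlier partial sums avoid `A` -/
def Ev (N : ℕ) (A : Set ℕ) (n : ℕ) : Set (ℕ → Fin 6) :=
  {ω | ∃ t, partialSum N ω t = n ∧ ∀ u < t, partialSum N ω u ∉ A}

open scoped Classical in
lemma Ev_eq_iUnion (N : ℕ) (A : Set ℕ) (n : ℕ) :
    Ev N A n = ⋃ l : List (Fin 6), (if Good N n A l then cyl l else ∅) := by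
  ext ω
  simp only [Set.mem_iUnion]
  constructor
  · rintro ⟨t, ht, havoid⟩
    have hlen : (List.ofFn (fun i : Fin t => ω i)).length = t := by simp
    have hcyl : ω ∈ cyl (List.ofFn (fun i : Fin t => ω i)) := by
      intro i hi
      rw [hlen] at hi
      rw [List.getD_eq_getElem _ 0 (by rw [hlen]; exact hi)]
      simp [List.getElem_ofFn]
    refine ⟨List.ofFn (fun i : Fin t => ω i), ?_⟩
    have hgood : Good N n A (List.ofFn (fun i : Fin t => ω i)) := by
      constructor
      · have := partialSum_eq_pSum N ω _ hcyl (List.ofFn (fun i : Fin t => ω i)).length le_rfl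
        rw [List.take_length, hlen] at this
        rw [← this, ht]
      · intro t' ht'
        rw [← partialSum_eq_pSum N ω _ hcyl t' (le_of_lt ht')]
        apply havoid
        omega
    rw [if_pos hgood]
    exact hcyl
  · rintro ⟨l, hmem⟩
    by_cases hgood : Good N n A l
    · rw [if_pos hgood] at hmem
      refine ⟨l.length, ?_, ?_⟩
      · have := partialSum_eq_pSum N ω l hmem l.length le_rfl
        rw [List.take_length] at this
        rw [this, hgood.1]
      · intro u hu
        rw [partialSum_eq_pSum N ω l hmem u (le_of_lt hu)]
        exact hgood.2 u hu
    · rw [if_neg hgood] at hmem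
      exact absurd hmem (Set.notMem_empty ω)

open scoped Classical in
lemma Ev_disjoint (N : ℕ) (A : Set ℕ) (n : ℕ) :
    Pairwise (Function.onFun Disjoint (fun l => if Good N n A l then cyl l else ∅)) := by
  have aux : ∀ l₁ l₂ : List (Fin 6), Good N n A l₁ → Good N n A l₂ →
      l₁.length < l₂.length → ∀ ω, ω ∈ cyl l₁ → ω ∈ cyl l₂ → False := by
    intro l₁ l₂ h₁ h₂ hlt ω hc₁ hc₂
    have e1 : partialSum N ω l₁.length = pSum N l₁ := by
      have := partialSum_eq_pSum N ω l₁ hc₁ l₁.length le_rfl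
      rwa [List.take_length] at this
    have e2 : partialSum N ω l₁.length = pSum N (l₂.take l₁.length) :=
      partialSum_eq_pSum N ω l₂ hc₂ l₁.length (le_of_lt hlt)
    have e3 : pSum N (l₂.take l₁.length) < pSum N l₂ := pSum_take_lt N l₂ hlt
    rw [h₁.1, h₂.1] at *
    omega
  intro l₁ l₂ hne
  by_cases h₁ : Good N n A l₁
  · by_cases h₂ : Good N n A l₂
    · simp only [Function.onFun, if_pos h₁, if_pos h₂]
      rw [Set.disjoint_left]
      intro ω hc₁ hc₂
      rcases Nat.lt_trichotomy l₁.length l₂.length with hlt | heq | hgt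
      · exact aux l₁ l₂ h₁ h₂ hlt ω hc₁ hc₂
      · apply hne
        apply List.ext_getElem heq
        intro i hi₁ hi₂
        rw [← List.getD_eq_getElem l₁ 0 hi₁, ← List.getD_eq_getElem l₂ 0 hi₂,
          ← hc₁ i hi₁, ← hc₂ i hi₂]
      · exact aux l₂ l₁ h₂ h₁ hgt ω hc₂ hc₁
    · simp [Function.onFun, if_neg h₂]
  · simp [Function.onFun, if_neg h₁]

open scoped Classical in
lemma measurable_Ev (N : ℕ) (A : Set ℕ) (n : ℕ) : MeasurableSet (Ev N A n) := by
  rw [Ev_eq_iUnion]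
  apply MeasurableSet.iUnion
  intro l
  split
  · exact measurable_cyl l
  · exact MeasurableSet.empty

lemma meas_Ev (P : Measure (ℕ → Fin 6)) [IsProbabilityMeasure P]
    (hIndep : iIndepFun (fun n (ω : ℕ → Fin 6) => ω n) P)
    (hUnif : ∀ (n : ℕ) (i : Fin 6), P {ω | ω n = i} = 1 / 6) (N : ℕ) (A : Set ℕ) (n : ℕ) :
    P (Ev N A n) = gsum N A n := by
  classical
  rw [Ev_eq_iUnion, measure_iUnion (Ev_disjoint N A n)
    (fun l => by split; exacts [measurable_cyl l, MeasurableSet.empty]), gsum]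
  apply tsum_congr
  intro l
  split
  · exact meas_cyl P hIndep hUnif l
  · exact measure_empty

/-- the event: the walk never hits a prime -/
def Nev (N : ℕ) : Set (ℕ → Fin 6) := {ω | ∀ t, ¬ (partialSum N ω t).Prime}

open scoped Classical in
lemma Nev_eq (N : ℕ) :
    Nev N = (⋃ p : ℕ, (if p.Prime then Ev N {q | q.Prime} p else ∅))ᶜ := by
  ext ω
  simp only [Set.mem_compl_iff, Set.mem_iUnion, not_exists]
  constructor
  · intro hω p hp
    by_cases hpp : p.Prime
    · rw [if_pos hpp] at hp
      obtain ⟨t, ht, -⟩ := hp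
      exact hω t (ht ▸ hpp)
    · rw [if_neg hpp] at hp
      exact hp
  · intro h t hprime
    have hex : ∃ u, (partialSum N ω u).Prime := ⟨t, hprime⟩
    apply h (partialSum N ω (Nat.find hex))
    rw [if_pos (Nat.find_spec hex)]
    exact ⟨Nat.find hex, rfl, fun u hu => Nat.find_min hex hu⟩

open scoped Classical in
lemma measurable_Nev (N : ℕ) : MeasurableSet (Nev N) := by
  rw [Nev_eq]
  apply MeasurableSet.compl
  apply MeasurableSet.iUnion
  intro p
  split
  exacts [measurable_Ev N _ p, MeasurableSet.empty]

lemma meas_Nev_le (P : Measure (ℕ → Fin 6)) [IsProbabilityMeasure P]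
    (hIndep : iIndepFun (fun n (ω : ℕ → Fin 6) => ω n) P)
    (hUnif : ∀ (n : ℕ) (i : Fin 6), P {ω | ω n = i} = 1 / 6) (N n : ℕ) (hn : N + 1 ≤ n) :
    P (Nev N) ≤ 6 * Wf N (Ap N) n := by
  classical
  have hcover : Nev N ⊆ ⋃ j ∈ Finset.range 6,
      (if j + 1 ≤ n ∧ (n - j - 1) ∉ Ap N then Ev N (Ap N) (n - j - 1) else ∅) := by
    intro ω hω
    have hex : ∃ t, n ≤ partialSum N ω t := ⟨n, by have := partialSum_ge N ω n; omega⟩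
    have hspec : n ≤ partialSum N ω (Nat.find hex) := Nat.find_spec hex
    have hT0 : 1 ≤ Nat.find hex := by
      rcases Nat.eq_zero_or_pos (Nat.find hex) with h0 | h1
      · rw [h0, partialSum_zero] at hspec; omega
      · exact h1
    have hlt : partialSum N ω (Nat.find hex - 1) < n := by
      have := Nat.find_min hex (m := Nat.find hex - 1) (by omega)
      omega
    have hstep : partialSum N ω (Nat.find hex) ≤ partialSum N ω (Nat.find hex - 1) + 6 := by
      have h2 := partialSum_le_succ N ω (Nat.find hex - 1)
      have hTT : Nat.find hex - 1 + 1 = Nat.find hex := by omega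
      rwa [hTT] at h2
    have h6 : n - 1 - partialSum N ω (Nat.find hex - 1) < 6 := by omega
    have e : n - (n - 1 - partialSum N ω (Nat.find hex - 1)) - 1
        = partialSum N ω (Nat.find hex - 1) := by omega
    refine Set.mem_biUnion (Finset.mem_range.mpr h6) ?_
    rw [if_pos ⟨by omega, by rw [e]; exact fun hAp => hω (Nat.find hex - 1) hAp.1⟩, e]
    exact ⟨Nat.find hex - 1, rfl, fun u hu hAp => hω u hAp.1⟩
  calc P (Nev N)
      ≤ ∑ j ∈ Finset.range 6,
        P (if j + 1 ≤ n ∧ (n - j - 1) ∉ Ap N then Ev N (Ap N) (n - j - 1) else ∅) :=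
        le_trans (measure_mono hcover) (measure_biUnion_finset_le _ _)
    _ = ∑ j ∈ Finset.range 6, gg N (Ap N) n j := by
        apply Finset.sum_congr rfl
        intro j _
        by_cases hc : j + 1 ≤ n ∧ (n - j - 1) ∉ Ap N
        · rw [if_pos hc, gg, if_pos hc]
          exact meas_Ev P hIndep hUnif N (Ap N) (n - j - 1)
        · rw [if_neg hc, gg, if_neg hc, measure_empty]
    _ = 6 * w0f N (Ap N) n := by
        rw [w0f, Finset.mul_sum]
        apply Finset.sum_congr rfl
        intro j _
        rw [← mul_assoc, ENNReal.mul_inv_cancel (by norm_num) (by norm_num), one_mul]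
    _ ≤ 6 * Wf N (Ap N) n := by
        gcongr
        exact w0f_le_Wf N (Ap N) n

lemma div56_lt_one : (5/6 : ℝ≥0∞) < 1 := by
  rw [div_eq_mul_inv]
  have h1 : (1 : ℝ≥0∞) = 6 * 6⁻¹ := (ENNReal.mul_inv_cancel (by norm_num) (by norm_num)).symm
  rw [h1]
  exact ENNReal.mul_lt_mul_left (by norm_num) (by norm_num) (by norm_num)

lemma meas_Nev (P : Measure (ℕ → Fin 6)) [IsProbabilityMeasure P]
    (hIndep : iIndepFun (fun n (ω : ℕ → Fin 6) => ω n) P)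
    (hUnif : ∀ (n : ℕ) (i : Fin 6), P {ω | ω n = i} = 1 / 6) (N : ℕ) :
    P (Nev N) = 0 := by
  have hb : ∀ r : ℕ, P (Nev N) ≤ 6 * (5/6 : ℝ≥0∞) ^ r := by
    intro r
    obtain ⟨n, hn, hr⟩ := exists_big_primesBetween N r
    calc P (Nev N) ≤ 6 * Wf N (Ap N) n := meas_Nev_le P hIndep hUnif N n hn
      _ ≤ 6 * (5/6 : ℝ≥0∞) ^ primesBetween N (n - 1) := by
          gcongr
          exact Wf_le N n hn
      _ ≤ 6 * (5/6 : ℝ≥0∞) ^ r :=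
          mul_le_mul_right (pow_le_pow_of_le_one zero_le (le_of_lt div56_lt_one) hr) 6
  have htend : Filter.Tendsto (fun r : ℕ => 6 * (5/6 : ℝ≥0∞) ^ r) Filter.atTop (nhds 0) := by
    have h1 := ENNReal.tendsto_pow_atTop_nhds_zero_of_lt_one div56_lt_one
    have h2 := ENNReal.Tendsto.const_mul (a := 6) h1 (Or.inr (by norm_num))
    simpa using h2
  exact le_antisymm (ge_of_tendsto' htend hb) zero_le

end RMUB

/-- Generalized upper bound for higher moments: for `A` the set of primes and `k ≥ 1`,
`E[τ_N^k] ≤ Σ_{p prime, p ≥ N} (p − N)^k · (5/6)^{π(N, p−1)}`. -/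
theorem raw_moment_upper_bound
    (P : Measure (ℕ → Fin 6)) [IsProbabilityMeasure P]
    (hIndep : iIndepFun (fun n (ω : ℕ → Fin 6) => ω n) P)
    (hUnif : ∀ (n : ℕ) (i : Fin 6), P {ω | ω n = i} = 1 / 6) (N : ℕ) (k : ℕ) (hk : 1 ≤ k) :
    (∫⁻ ω, ((hitTime {n | n.Prime} N ω : ℝ≥0∞)) ^ k ∂P)
      ≤ ∑' p : ℕ, if p.Prime ∧ N ≤ p then
          ((p - N : ℕ) : ℝ≥0∞) ^ k * (5 / 6 : ℝ≥0∞) ^ primesBetween N (p - 1)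
        else 0 := by
  classical
  have hNev : P (RMUB.Nev N) = 0 := RMUB.meas_Nev P hIndep hUnif N
  set f : (ℕ → Fin 6) → ℝ≥0∞ := fun ω => ((hitTime {n | n.Prime} N ω : ℝ≥0∞)) ^ k with hf
  rw [← lintegral_add_compl f (RMUB.measurable_Nev N)]
  have h1 : ∫⁻ ω in RMUB.Nev N, f ω ∂P = 0 := by
    rw [Measure.restrict_eq_zero.mpr hNev, lintegral_zero_measure]
  rw [h1, zero_add]
  have hcompl : (RMUB.Nev N)ᶜ
      = ⋃ p : ℕ, (if p.Prime then RMUB.Ev N {q | q.Prime} p else ∅) := by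
    rw [RMUB.Nev_eq, compl_compl]
  rw [hcompl]
  refine le_trans (lintegral_iUnion_le _ _) (ENNReal.tsum_le_tsum ?_)
  intro p
  by_cases hp : p.Prime
  · by_cases hpN : N ≤ p
    · rw [if_pos hp, if_pos ⟨hp, hpN⟩]
      have hbound : ∀ ω ∈ RMUB.Ev N {q | q.Prime} p, f ω ≤ ((p - N : ℕ) : ℝ≥0∞) ^ k := by
        intro ω hω
        obtain ⟨t, ht, -⟩ := hω
        have hτ : hitTime {n | n.Prime} N ω ≤ (t : ℕ∞) :=
          sInf_le ⟨t, rfl, by rw [ht]; exact hp⟩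
        have htle : t ≤ p - N := by
          have := RMUB.partialSum_ge N ω t
          omega
        have hcast : ((hitTime {n | n.Prime} N ω : ℝ≥0∞)) ≤ ((p - N : ℕ) : ℝ≥0∞) := by
          calc ((hitTime {n | n.Prime} N ω : ℝ≥0∞)) ≤ (((t : ℕ∞) : ℝ≥0∞)) :=
                ENat.toENNReal_le.mpr hτ
            _ ≤ ((p - N : ℕ) : ℝ≥0∞) := by
                rw [ENat.toENNReal_coe]
                exact_mod_cast htle
        exact pow_le_pow_left₀ zero_le hcast k
      calc ∫⁻ ω in RMUB.Ev N {q | q.Prime} p, f ω ∂P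
          ≤ ∫⁻ _ in RMUB.Ev N {q | q.Prime} p, ((p - N : ℕ) : ℝ≥0∞) ^ k ∂P :=
            setLIntegral_mono' (RMUB.measurable_Ev N _ p) hbound
        _ = ((p - N : ℕ) : ℝ≥0∞) ^ k * P (RMUB.Ev N {q | q.Prime} p) :=
            setLIntegral_const _ _
        _ ≤ ((p - N : ℕ) : ℝ≥0∞) ^ k * (5 / 6 : ℝ≥0∞) ^ primesBetween N (p - 1) := by
            gcongr
            rcases eq_or_lt_of_le hpN with rfl | hlt
            · have hpb : primesBetween N (N - 1) = 0 := by
                rw [primesBetween]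
                rw [Finset.Icc_eq_empty (by omega)]
                simp
              rw [hpb, pow_zero]
              exact prob_le_one
            · have hle : P (RMUB.Ev N {q | q.Prime} p) ≤ RMUB.gsum N (RMUB.Ap N) p := by
                rw [← RMUB.meas_Ev P hIndep hUnif N (RMUB.Ap N) p]
                apply measure_mono
                rintro ω ⟨t, ht, hav⟩
                exact ⟨t, ht, fun u hu hAp => hav u hu hAp.1⟩
              exact le_trans hle (RMUB.gsum_prime_bound N p hlt)
    · rw [if_pos hp, if_neg (fun h => hpN h.2)]
      have hemp : RMUB.Ev N {q | q.Prime} p = ∅ := by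
        ext ω
        simp only [Set.mem_empty_iff_false, iff_false]
        rintro ⟨t, ht, -⟩
        have := RMUB.partialSum_ge N ω t
        omega
      rw [hemp]
      simp
  · rw [if_neg hp, if_neg (fun h => hp h.1)]
    simp
end
end
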